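/- If q_i denotes the i-th square-free number in increasing order (q₁ = 1, q₂ = 2, q₃ = 3, …), then q_{i+1} < 2·q_i for all i ≥ 2. -/
import Mathlib


theorem stmt_18 (q : ℕ → ℕ)
    (hmono : ∀ i ≥ 1, q i < q (i + 1))
    (hsf : ∀ i ≥ 1, Squarefree (q i))
    (hall : ∀ n : ℕ, Squarefree n → ∃ i ≥ 1, q i = n)
    (hq1 : q 1 = 1) (hq2 : q 2 = 2) :
    ∀ i ≥ 2, q (i + 1) < 2 * q i := by
  have hmono' : ∀ a b, 1 ≤ a → a < b → q a < q b := by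
    intro a b ha hab
    induction b with
    | zero => omega
    | succ n ih =>
      rcases Nat.lt_succ_iff_lt_or_eq.mp hab with h | h
      · exact lt_trans (ih h) (hmono n (by omega))
      · subst h; exact hmono a ha
  intro i hi
  have hm2 : 2 ≤ q i := by
    rcases eq_or_lt_of_le hi with h | h
    · rw [← h]; omega
    · have := hmono' 2 i (by norm_num) h; omega
  obtain ⟨p, hp, hlt, hle⟩ := Nat.exists_prime_lt_and_le_two_mul (q i) (by omega)
  have hplt : p < 2 * q i := by
    rcases lt_or_eq_of_le hle with h | h
    · exact h
    · exfalso
      have h2 : (2 : ℕ) ∣ p := ⟨q i, h⟩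
      rcases (Nat.Prime.eq_one_or_self_of_dvd hp 2 h2) with h' | h' <;> omega
  obtain ⟨j, hj1, hjq⟩ := hall p hp.squarefree
  have hij : i < j := by
    by_contra hle'
    push_neg at hle'
    rcases lt_or_eq_of_le hle' with h | h
    · have := hmono' j i hj1 h; omega
    · rw [h] at hjq; omega
  have : q (i + 1) ≤ q j := by
    rcases eq_or_lt_of_le (Nat.succ_le_of_lt hij) with h | h
    · exact le_of_eq (congrArg q h)
    · exact le_of_lt (hmono' (i + 1) j (by omega) h)
  omega
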